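/- If a is a Hurwitz stable real polynomial of degree n and b is a real polynomial of degree n with Re[b(iω)/a(iω)] > 0 for all real ω, then b is also Hurwitz stable (b has no roots with nonnegative real part). -/

import Mathlib

open Polynomial

noncomputable def evalI (p : Polynomial ℝ) (ω : ℝ) : ℂ :=
  (p.map (algebraMap ℝ ℂ)).eval ((ω : ℂ) * Complex.I)

noncomputable def evalNegI (p : Polynomial ℝ) (ω : ℝ) : ℂ :=
  (p.map (algebraMap ℝ ℂ)).eval (-((ω : ℂ) * Complex.I))

def Hurwitz (p : Polynomial ℝ) : Prop :=
  ∀ z : ℂ, (p.map (algebraMap ℝ ℂ)).eval z = 0 → z.re < 0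

open Filter Bornology in
/-- `P(z)/z^(natDegree P)` tends to the leading coefficient at infinity. -/
lemma tendsto_eval_div_pow (P : Polynomial ℂ) :
    Filter.Tendsto (fun z : ℂ => P.eval z / z ^ P.natDegree) (Bornology.cobounded ℂ)
      (nhds P.leadingCoeff) := by
  set m := P.natDegree with hm
  have hz0 : ∀ᶠ z : ℂ in cobounded ℂ, z ≠ 0 := by
    filter_upwards [(tendsto_norm_cobounded_atTop (E := ℂ)).eventually_ge_atTop 1] with z hz
    intro h
    rw [h, norm_zero] at hz
    linarith
  have hcont : Filter.Tendsto
      (fun w : ℂ => ∑ i ∈ Finset.range (m + 1), P.coeff i * w ^ (m - i)) (nhds 0)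
      (nhds (∑ i ∈ Finset.range (m + 1), P.coeff i * (0 : ℂ) ^ (m - i))) := by
    exact Continuous.tendsto (by continuity) 0
  have hsum : (∑ i ∈ Finset.range (m + 1), P.coeff i * (0 : ℂ) ^ (m - i)) = P.leadingCoeff := by
    rw [Finset.sum_eq_single m]
    · rw [Nat.sub_self, pow_zero, mul_one, hm, Polynomial.coeff_natDegree]
    · intro i hi hne
      have hilt : i < m := lt_of_le_of_ne (Nat.lt_succ_iff.mp (Finset.mem_range.mp hi)) hne
      have : m - i ≠ 0 := Nat.sub_ne_zero_of_lt hilt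
      simp [zero_pow this]
    · intro h
      exact absurd (Finset.self_mem_range_succ m) h
  have h2 := hcont.comp (tendsto_inv₀_cobounded (α := ℂ))
  rw [hsum] at h2
  refine h2.congr' ?_
  filter_upwards [hz0] with z hz
  rw [Function.comp_apply, Polynomial.eval_eq_sum_range, Finset.sum_div]
  refine Finset.sum_congr rfl fun i hi => ?_
  have him : i ≤ m := Nat.lt_succ_iff.mp (Finset.mem_range.mp hi)
  have hzi : (z⁻¹) ^ (m - i) = z ^ i / z ^ m := by
    rw [inv_pow, pow_sub₀ z hz him, ← div_eq_mul_inv, inv_div]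
  rw [hzi, mul_div_assoc]

/-- SPR implies the numerator is Hurwitz stable. -/
theorem stmt3 (n : ℕ) (a b : Polynomial ℝ) (ha : Hurwitz a)
    (hdega : a.degree = n) (hdegb : b.degree = n)
    (hspr : ∀ ω : ℝ, 0 < (evalI b ω / evalI a ω).re) :
    Hurwitz b := by
  classical
  open Filter Bornology Complex in
  intro z0 hz0
  by_contra hcon
  push_neg at hcon
  set A : Polynomial ℂ := a.map (algebraMap ℝ ℂ) with hA
  set B : Polynomial ℂ := b.map (algebraMap ℝ ℂ) with hB
  have hA0 : ∀ z : ℂ, 0 ≤ z.re → A.eval z ≠ 0 := fun z hz h =>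
    absurd (ha z h) (not_lt.mpr hz)
  -- z0 cannot be on the imaginary axis
  have hz0pos : 0 < z0.re := by
    rcases hcon.lt_or_eq with h | h
    · exact h
    · exfalso
      have hz0eq : (z0.im : ℂ) * Complex.I = z0 := by
        apply Complex.ext <;> simp [← h]
      have h2 := hspr z0.im
      rw [evalI, hz0eq, hz0] at h2
      simp at h2
  -- degrees
  have hAne : A ≠ 0 := by
    intro h
    have : A.degree = (n : WithBot ℕ) := by
      rw [hA, Polynomial.degree_map, hdega]
    rw [h, Polynomial.degree_zero] at this
    exact absurd this.symm (by simp)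
  have hndA : A.natDegree = n := by
    rw [hA, Polynomial.natDegree_map]
    exact Polynomial.natDegree_eq_of_degree_eq_some hdega
  have hndB : B.natDegree = n := by
    rw [hB, Polynomial.natDegree_map]
    exact Polynomial.natDegree_eq_of_degree_eq_some hdegb
  have hla : A.leadingCoeff ≠ 0 := Polynomial.leadingCoeff_ne_zero.mpr hAne
  -- the ratio tends to a finite limit at infinity
  have hTend : Filter.Tendsto (fun z : ℂ => B.eval z / A.eval z) (cobounded ℂ)
      (nhds (B.leadingCoeff / A.leadingCoeff)) := by
    have hT := (tendsto_eval_div_pow B).div (tendsto_eval_div_pow A) hla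
    refine hT.congr' ?_
    filter_upwards [(tendsto_norm_cobounded_atTop (E := ℂ)).eventually_ge_atTop 1] with z hz
    have hzne : z ≠ 0 := by
      intro h; rw [h, norm_zero] at hz; linarith
    have hzp : (z : ℂ) ^ n ≠ 0 := pow_ne_zero _ hzne
    simp only [Pi.div_apply, hndA, hndB]
    rw [div_div_div_cancel_right₀ hzp]
  set C : ℝ := ‖B.leadingCoeff / A.leadingCoeff‖ + 1 with hC
  have hCb : ∀ᶠ z : ℂ in cobounded ℂ, ‖B.eval z / A.eval z‖ ≤ C :=
    hTend.norm.eventually (eventually_le_nhds (lt_add_one _))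
  -- the function for Phragmen-Lindelof
  set F : ℂ → ℂ := fun z => Complex.exp (-(B.eval z / A.eval z)) with hF
  have hFnorm : ∀ z : ℂ, ‖F z‖ = Real.exp (-(B.eval z / A.eval z).re) := by
    intro z
    rw [hF]
    simp [Complex.norm_exp]
  have hFle : ∀ z : ℂ, ‖B.eval z / A.eval z‖ ≤ C → ‖F z‖ ≤ Real.exp C := by
    intro z hz
    rw [hFnorm]
    apply Real.exp_le_exp.mpr
    calc -(B.eval z / A.eval z).re ≤ |(B.eval z / A.eval z).re| := neg_le_abs _
      _ ≤ ‖B.eval z / A.eval z‖ := Complex.abs_re_le_norm _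
      _ ≤ C := hz
  have hdiff : ∀ z : ℂ, A.eval z ≠ 0 → DifferentiableAt ℂ F z := by
    intro z hz
    exact (((B.differentiable.differentiableAt).div
      (A.differentiable.differentiableAt) hz).neg).cexp
  have hd : DiffContOnCl ℂ F {z : ℂ | 0 < z.re} := by
    constructor
    · exact fun z hz => (hdiff z (hA0 z (le_of_lt hz))).differentiableWithinAt
    · have hsub : closure {z : ℂ | 0 < z.re} ⊆ {z : ℂ | 0 ≤ z.re} := by
        apply closure_minimal
        · exact Set.setOf_subset_setOf.mpr fun z hz => le_of_lt hz
        · exact isClosed_le continuous_const Complex.continuous_re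
      exact fun z hz => (hdiff z (hA0 z (hsub hz))).continuousAt.continuousWithinAt
  have hexp : ∃ c < (2 : ℝ), ∃ B0 : ℝ,
      F =O[cobounded ℂ ⊓ Filter.principal {z : ℂ | 0 < z.re}]
        fun z => Real.exp (B0 * ‖z‖ ^ c) := by
    refine ⟨1, one_lt_two, 0, Asymptotics.IsBigO.of_bound (Real.exp C) ?_⟩
    filter_upwards [hCb.filter_mono inf_le_left] with z hz
    simpa using hFle z hz
  have hreb : IsBoundedUnder (· ≤ ·) atTop fun x : ℝ => ‖F x‖ := by
    have hmap : Filter.Tendsto (fun x : ℝ => (x : ℂ)) atTop (cobounded ℂ) := by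
      rw [← tendsto_norm_atTop_iff_cobounded]
      simpa using tendsto_abs_atTop_atTop
    refine ⟨Real.exp C, ?_⟩
    rw [Filter.eventually_map]
    filter_upwards [hmap.eventually hCb] with x hx
    exact hFle _ hx
  have him : ∀ x : ℝ, ‖F ((x : ℂ) * Complex.I)‖ ≤ 1 := by
    intro x
    rw [hFnorm]
    rw [Real.exp_le_one_iff]
    have := hspr x
    rw [evalI, evalI] at this
    linarith
  have hPL : ∀ z : ℂ, 0 ≤ z.re → ‖F z‖ ≤ 1 := fun z hz =>
    PhragmenLindelof.right_half_plane_of_bounded_on_real hd hexp hreb him hz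
  -- maximum modulus principle
  have hFz0 : F z0 = 1 := by
    rw [hF]
    simp [hz0]
  have hmax : IsMaxOn (norm ∘ F) {z : ℂ | 0 < z.re} z0 := by
    intro w hw
    simp only [Function.comp_apply, hFz0]
    calc ‖F w‖ ≤ 1 := hPL w (le_of_lt hw)
      _ = ‖(1 : ℂ)‖ := by simp
  have hEq := Complex.eqOn_of_isPreconnected_of_isMaxOn_norm
    (convex_halfSpace_re_gt (0 : ℝ)).isPreconnected (isOpen_lt continuous_const Complex.continuous_re)
    (fun z hz => (hdiff z (hA0 z (le_of_lt hz))).differentiableWithinAt) hz0pos hmax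
  -- find a positive real point where Re(B/A) > 0, contradicting constancy
  have hA0' : A.eval ((0 : ℝ) : ℂ) ≠ 0 := hA0 _ (by simp)
  have hφc : ContinuousAt (fun t : ℝ => ((B.eval (t : ℂ)) / (A.eval (t : ℂ))).re) 0 := by
    apply Complex.continuous_re.continuousAt.comp
    exact ContinuousAt.div
      ((B.continuous.comp Complex.continuous_ofReal).continuousAt)
      ((A.continuous.comp Complex.continuous_ofReal).continuousAt) hA0'
  have hφ0 : 0 < ((B.eval ((0 : ℝ) : ℂ)) / (A.eval ((0 : ℝ) : ℂ))).re := by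
    have h2 := hspr 0
    rw [evalI, evalI] at h2
    simp only [Complex.ofReal_zero, zero_mul] at h2 ⊢
    exact h2
  have hgt : ∀ᶠ y in nhds (((B.eval ((0 : ℝ) : ℂ)) / (A.eval ((0 : ℝ) : ℂ))).re), 0 < y :=
    eventually_gt_nhds hφ0
  have hev : ∀ᶠ t : ℝ in nhdsWithin (0 : ℝ) (Set.Ioi 0),
      0 < ((B.eval (Complex.ofReal t)) / (A.eval (Complex.ofReal t))).re :=
    (Filter.Tendsto.eventually hφc hgt).filter_mono nhdsWithin_le_nhds
  obtain ⟨t, hφt, ht0⟩ := (hev.and self_mem_nhdsWithin).exists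
  have htU : (t : ℂ) ∈ {z : ℂ | 0 < z.re} := by
    simp only [Set.mem_setOf_eq, Complex.ofReal_re]
    exact ht0
  have hFt := hEq htU
  rw [Function.const_apply, hFz0] at hFt
  have : ‖F (t : ℂ)‖ = 1 := by rw [hFt]; simp
  rw [hFnorm] at this
  have h1 : -(B.eval (t : ℂ) / A.eval (t : ℂ)).re < 0 := by linarith
  rw [Real.exp_eq_one_iff] at this
  linarith
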